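/- arXiv:1907.02689 — 2 statements merged into one kernel-verified Lean document; each statement's English description precedes it below -/
import Mathlib

section
/- With the third Semaev summation polynomial S₃(X₁,X₂,X₃) = 4σ₁(σ₃+b) − (σ₂−a)² for the curve Y² = X³ + aX + b (where σᵢ are the elementary symmetric polynomials in X₁,X₂,X₃), for any three affine points Q₁, Q₂, Q₃ on the curve with abscissae x₁, x₂, x₃, we have S₃(x₁,x₂,x₃) = 0 if and only if there exist signs e₁, e₂, e₃ ∈ {−1,1} with e₁Q₁ + e₂Q₂ + e₃Q₃ = O. -/
open WeierstrassCurve.Affine WeierstrassCurve.Affine.Point in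
private lemma someCongr' {K : Type} [Field K] {W : WeierstrassCurve.Affine K} {x y x' y' : K}
    (h : W.Nonsingular x y) (h' : W.Nonsingular x' y') (hx : x = x') (hy : y = y') :
    WeierstrassCurve.Affine.Point.some _ _ h = WeierstrassCurve.Affine.Point.some _ _ h' := by
  subst hx; subst hy; rfl

open Classical in
/-- For the curve `Y² = X³ + aX + b` (char `≠ 2, 3`) with third Semaev summation polynomial
`S₃ = 4σ₁(σ₃+b) − (σ₂−a)²`, three affine points `Q₁, Q₂, Q₃` with abscissae `x₁, x₂, x₃`
satisfy `S₃(x₁,x₂,x₃) = 0` iff `e₁Q₁ + e₂Q₂ + e₃Q₃ = O` for some signs `eᵢ ∈ {−1, 1}`. -/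
theorem stmt_10 (K : Type) [Field K] (h2 : (2 : K) ≠ 0) (h3 : (3 : K) ≠ 0)
    (a b : K) (W : WeierstrassCurve.Affine K)
    (hW : W = { a₁ := 0, a₂ := 0, a₃ := 0, a₄ := a, a₆ := b })
    (hΔ : W.Δ ≠ 0)
    (x₁ y₁ x₂ y₂ x₃ y₃ : K)
    (h₁ : W.Nonsingular x₁ y₁) (h₂ : W.Nonsingular x₂ y₂) (h₃ : W.Nonsingular x₃ y₃) :
    4 * (x₁ + x₂ + x₃) * (x₁ * x₂ * x₃ + b)
        - (x₁ * x₂ + x₁ * x₃ + x₂ * x₃ - a) ^ 2 = 0 ↔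
      ∃ e₁ e₂ e₃ : ℤ, (e₁ = 1 ∨ e₁ = -1) ∧ (e₂ = 1 ∨ e₂ = -1) ∧ (e₃ = 1 ∨ e₃ = -1) ∧
        e₁ • (WeierstrassCurve.Affine.Point.some _ _ h₁ : W.Point)
          + e₂ • (WeierstrassCurve.Affine.Point.some _ _ h₂ : W.Point)
          + e₃ • (WeierstrassCurve.Affine.Point.some _ _ h₃ : W.Point) = 0 := by
  have ha₁ : W.a₁ = 0 := by rw [hW]
  have ha₂ : W.a₂ = 0 := by rw [hW]
  have ha₃ : W.a₃ = 0 := by rw [hW]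
  have ha₄ : W.a₄ = a := by rw [hW]
  have ha₆ : W.a₆ = b := by rw [hW]
  have hnegY : ∀ u v : K, W.negY u v = -v := fun u v => by
    simp only [WeierstrassCurve.Affine.negY, ha₁, ha₃]; ring
  have hcurve : ∀ {u v : K}, W.Nonsingular u v → v ^ 2 = u ^ 3 + a * u + b := by
    intro u v h
    have h' := (W.equation_iff u v).mp h.1
    rw [ha₁, ha₂, ha₃, ha₄, ha₆] at h'
    linear_combination h'
  have E1 := hcurve h₁
  have E2 := hcurve h₂
  have E3 := hcurve h₃
  have hdich : ∀ {v w : K}, v ^ 2 = w ^ 2 → v = w ∨ v = -w := by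
    intro v w h
    rcases mul_eq_zero.mp (show (v - w) * (v + w) = 0 by linear_combination h) with h' | h'
    · exact Or.inl (sub_eq_zero.mp h')
    · exact Or.inr (by linear_combination h')
  -- the intermediate proposition
  have part2 : (∃ w₂ : K, (w₂ = y₂ ∨ w₂ = -y₂) ∧ ∃ h₂' : W.Nonsingular x₂ w₂,
      ¬(x₁ = x₂ ∧ y₁ = -w₂) ∧ W.addX x₁ x₂ (W.slope x₁ x₂ y₁ w₂) = x₃) ↔
      (∃ e₁ e₂ e₃ : ℤ, (e₁ = 1 ∨ e₁ = -1) ∧ (e₂ = 1 ∨ e₂ = -1) ∧ (e₃ = 1 ∨ e₃ = -1) ∧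
        e₁ • (WeierstrassCurve.Affine.Point.some _ _ h₁ : W.Point)
          + e₂ • (WeierstrassCurve.Affine.Point.some _ _ h₂ : W.Point)
          + e₃ • (WeierstrassCurve.Affine.Point.some _ _ h₃ : W.Point) = 0) := by
    constructor
    · rintro ⟨w₂, hw₂, h₂', hcond, hX⟩
      have hxy' : x₁ = x₂ → y₁ ≠ W.negY x₂ w₂ := by
        intro hxx hyy
        rw [hnegY] at hyy
        exact hcond ⟨hxx, hyy⟩
      have hns' := WeierstrassCurve.Affine.nonsingular_add h₁ h₂' (fun h => hxy' h.1 h.2)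
      have hns : W.Nonsingular x₃ (W.addY x₁ x₂ y₁ (W.slope x₁ x₂ y₁ w₂)) := by
        rw [← hX]; exact hns'
      have hadd : WeierstrassCurve.Affine.Point.some _ _ h₁ + WeierstrassCurve.Affine.Point.some _ _ h₂'
          = WeierstrassCurve.Affine.Point.some _ _ hns := by
        rw [WeierstrassCurve.Affine.Point.add_some (fun h => hxy' h.1 h.2)]
        exact someCongr' _ _ hX rfl
      obtain ⟨e₂, he₂, hsm₂⟩ : ∃ e₂ : ℤ, (e₂ = 1 ∨ e₂ = -1) ∧
          e₂ • (WeierstrassCurve.Affine.Point.some _ _ h₂ : W.Point)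
            = WeierstrassCurve.Affine.Point.some _ _ h₂' := by
        rcases hw₂ with h | h
        · exact ⟨1, Or.inl rfl, by rw [one_zsmul]; exact someCongr' _ _ rfl h.symm⟩
        · refine ⟨-1, Or.inr rfl, ?_⟩
          rw [neg_one_zsmul, WeierstrassCurve.Affine.Point.neg_some]
          exact someCongr' _ _ rfl (by rw [hnegY, h])
      rcases hdich (show (W.addY x₁ x₂ y₁ (W.slope x₁ x₂ y₁ w₂)) ^ 2 = y₃ ^ 2 by
          rw [hcurve hns, E3]) with hw | hw
      · refine ⟨1, e₂, -1, Or.inl rfl, he₂, Or.inr rfl, ?_⟩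
        rw [one_zsmul, neg_one_zsmul, hsm₂, hadd, someCongr' hns h₃ rfl hw]
        exact add_neg_cancel _
      · refine ⟨1, e₂, 1, Or.inl rfl, he₂, Or.inl rfl, ?_⟩
        rw [one_zsmul, one_zsmul, hsm₂, hadd,
          someCongr' hns ((W.nonsingular_neg _ _).mpr h₃) rfl (by rw [hnegY, hw]),
          ← WeierstrassCurve.Affine.Point.neg_some]
        exact neg_add_cancel _
    · rintro ⟨e₁, e₂, e₃, he₁, he₂, he₃, hsum⟩
      obtain ⟨f₂, f₃, hf₂, hf₃, hsum'⟩ : ∃ f₂ f₃ : ℤ, (f₂ = 1 ∨ f₂ = -1) ∧ (f₃ = 1 ∨ f₃ = -1) ∧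
          (WeierstrassCurve.Affine.Point.some _ _ h₁ : W.Point)
            + f₂ • (WeierstrassCurve.Affine.Point.some _ _ h₂ : W.Point)
            + f₃ • (WeierstrassCurve.Affine.Point.some _ _ h₃ : W.Point) = 0 := by
        rcases he₁ with rfl | rfl
        · exact ⟨e₂, e₃, he₂, he₃, by rwa [one_zsmul] at hsum⟩
        · refine ⟨-e₂, -e₃, ?_, ?_, ?_⟩
          · rcases he₂ with rfl | rfl
            · exact Or.inr rfl
            · exact Or.inl (by norm_num)
          · rcases he₃ with rfl | rfl
            · exact Or.inr rfl
            · exact Or.inl (by norm_num)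
          · have hneg : (WeierstrassCurve.Affine.Point.some _ _ h₁ : W.Point)
                + (-e₂) • (WeierstrassCurve.Affine.Point.some _ _ h₂ : W.Point)
                + (-e₃) • (WeierstrassCurve.Affine.Point.some _ _ h₃ : W.Point)
                = -((-1 : ℤ) • (WeierstrassCurve.Affine.Point.some _ _ h₁ : W.Point)
                  + e₂ • (WeierstrassCurve.Affine.Point.some _ _ h₂ : W.Point)
                  + e₃ • (WeierstrassCurve.Affine.Point.some _ _ h₃ : W.Point)) := by
              simp only [neg_zsmul, neg_one_zsmul, neg_add_rev, neg_neg]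
              abel
            rw [hneg, hsum, neg_zero]
      obtain ⟨w₂, hw₂, h₂', hsm₂⟩ : ∃ w₂ : K, (w₂ = y₂ ∨ w₂ = -y₂) ∧
          ∃ h₂' : W.Nonsingular x₂ w₂,
            f₂ • (WeierstrassCurve.Affine.Point.some _ _ h₂ : W.Point)
              = WeierstrassCurve.Affine.Point.some _ _ h₂' := by
        rcases hf₂ with rfl | rfl
        · exact ⟨y₂, Or.inl rfl, h₂, by rw [one_zsmul]⟩
        · refine ⟨-y₂, Or.inr rfl, ?_, ?_⟩
          · have := (W.nonsingular_neg _ _).mpr h₂; rwa [hnegY] at this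
          · rw [neg_one_zsmul, WeierstrassCurve.Affine.Point.neg_some]
            exact someCongr' _ _ rfl (hnegY _ _)
      obtain ⟨w₃, hw₃, h₃', hsm₃⟩ : ∃ w₃ : K, (w₃ = y₃ ∨ w₃ = -y₃) ∧
          ∃ h₃' : W.Nonsingular x₃ w₃,
            f₃ • (WeierstrassCurve.Affine.Point.some _ _ h₃ : W.Point)
              = WeierstrassCurve.Affine.Point.some _ _ h₃' := by
        rcases hf₃ with rfl | rfl
        · exact ⟨y₃, Or.inl rfl, h₃, by rw [one_zsmul]⟩
        · refine ⟨-y₃, Or.inr rfl, ?_, ?_⟩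
          · have := (W.nonsingular_neg _ _).mpr h₃; rwa [hnegY] at this
          · rw [neg_one_zsmul, WeierstrassCurve.Affine.Point.neg_some]
            exact someCongr' _ _ rfl (hnegY _ _)
      rw [hsm₂, hsm₃] at hsum'
      have heqpt : WeierstrassCurve.Affine.Point.some _ _ h₁ + WeierstrassCurve.Affine.Point.some _ _ h₂'
          = -WeierstrassCurve.Affine.Point.some _ _ h₃' := add_eq_zero_iff_eq_neg.mp hsum'
      rw [WeierstrassCurve.Affine.Point.neg_some] at heqpt
      have hcond : ¬(x₁ = x₂ ∧ y₁ = -w₂) := by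
        rintro ⟨hxx, hyy⟩
        have h0 : WeierstrassCurve.Affine.Point.some _ _ h₁ + WeierstrassCurve.Affine.Point.some _ _ h₂'
            = 0 := WeierstrassCurve.Affine.Point.add_of_Y_eq hxx (by rw [hnegY]; exact hyy)
        rw [h0] at heqpt
        exact WeierstrassCurve.Affine.Point.some_ne_zero _ heqpt.symm
      have hxy' : x₁ = x₂ → y₁ ≠ W.negY x₂ w₂ := by
        intro hxx hyy
        rw [hnegY] at hyy
        exact hcond ⟨hxx, hyy⟩
      rw [WeierstrassCurve.Affine.Point.add_some (fun h => hxy' h.1 h.2),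
        WeierstrassCurve.Affine.Point.some.injEq] at heqpt
      exact ⟨w₂, hw₂, h₂', hcond, heqpt.1⟩
  rw [← part2]
  clear part2
  by_cases hx : x₁ = x₂
  · subst hx
    have hy2 : y₂ = y₁ ∨ y₂ = -y₁ := hdich (by rw [E2, E1])
    by_cases hy0 : y₁ = 0
    · subst hy0
      have hy2' : y₂ = 0 := by rcases hy2 with h | h <;> simpa using h
      constructor
      · intro hS
        exfalso
        have hA : 3 * x₁ ^ 2 + a ≠ 0 := by
          rcases ((W.nonsingular_iff' x₁ 0).mp h₁).2 with h | h
          · intro h0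
            apply h
            rw [ha₁, ha₂, ha₄]
            linear_combination -h0
          · exact absurd (by rw [ha₁, ha₃]; ring) h
        apply hA
        have hsq : (3 * x₁ ^ 2 + a) ^ 2 = 0 := by
          linear_combination -hS + (-4 * x₃ - 8 * x₁) * E1
        exact (pow_eq_zero_iff (two_ne_zero)).mp hsq
      · rintro ⟨w₂, hw₂, h₂', hcond, -⟩
        exfalso
        apply hcond
        refine ⟨rfl, ?_⟩
        rcases hw₂ with rfl | rfl <;> simp [hy2']
    · have hyne : y₁ ≠ -y₁ := by
        intro hcon
        apply hy0
        have h2y : 2 * y₁ = 0 := by linear_combination hcon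
        exact (mul_eq_zero.mp h2y).resolve_left h2
      have hy1ne : y₁ ≠ W.negY x₁ y₁ := by rw [hnegY]; exact hyne
      have h2y : (2 : K) * y₁ ≠ 0 := mul_ne_zero h2 hy0
      have hsl : W.slope x₁ x₁ y₁ y₁ = (3 * x₁ ^ 2 + a) / (2 * y₁) := by
        rw [WeierstrassCurve.Affine.slope_of_Y_ne rfl hy1ne, hnegY, ha₁, ha₂, ha₄]
        congr 1 <;> ring
      have hADD : W.addX x₁ x₁ (W.slope x₁ x₁ y₁ y₁)
          = (3 * x₁ ^ 2 + a) ^ 2 / (2 * y₁) ^ 2 - x₁ - x₁ := by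
        rw [WeierstrassCurve.Affine.addX, hsl, ha₁, ha₂, div_pow]
        ring
      constructor
      · intro hS
        refine ⟨y₁, ?_, h₁, fun hc => hyne hc.2, ?_⟩
        · rcases hy2 with h | h
          · exact Or.inl h.symm
          · exact Or.inr (by rw [h, neg_neg])
        · rw [hADD]
          field_simp
          linear_combination -hS + (-4 * x₃ - 8 * x₁) * E1
      · rintro ⟨w₂, hw₂, h₂', hcond, hX⟩
        have hw₂' : w₂ = y₁ := by
          rcases hw₂ with h' | h' <;> rcases hy2 with h | h
          · exact h'.trans h
          · exfalso; exact hcond ⟨rfl, by rw [h', h, neg_neg]⟩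
          · exfalso; exact hcond ⟨rfl, by rw [h', h, neg_neg]⟩
          · rw [h', h, neg_neg]
        subst hw₂'
        rw [hADD] at hX
        field_simp at hX
        linear_combination -hX + (-4 * x₃ - 8 * x₁) * E1
  · have hd : x₁ - x₂ ≠ 0 := sub_ne_zero.mpr hx
    have hADD : ∀ w₂ : K, W.addX x₁ x₂ (W.slope x₁ x₂ y₁ w₂)
        = (y₁ - w₂) ^ 2 / (x₁ - x₂) ^ 2 - x₁ - x₂ := fun w₂ => by
      rw [WeierstrassCurve.Affine.addX, WeierstrassCurve.Affine.slope_of_X_ne hx, ha₁, ha₂,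
        div_pow]
      ring
    have key1 : (x₁ - x₂) ^ 2 * (4 * (x₁ + x₂ + x₃) * (x₁ * x₂ * x₃ + b)
          - (x₁ * x₂ + x₁ * x₃ + x₂ * x₃ - a) ^ 2)
        = -(((x₁ - x₂) ^ 2 * x₃ - ((y₁ - y₂) ^ 2 - (x₁ + x₂) * (x₁ - x₂) ^ 2))
          * ((x₁ - x₂) ^ 2 * x₃ - ((y₁ + y₂) ^ 2 - (x₁ + x₂) * (x₁ - x₂) ^ 2))) := by
      linear_combination (b - 2 * y₂ ^ 2 + y₁ ^ 2 - 2 * x₂ ^ 2 * x₃ - 2 * x₂ ^ 3 + x₁ * a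
          + 4 * x₁ * x₂ * x₃ + 2 * x₁ * x₂ ^ 2 - 2 * x₁ ^ 2 * x₃ + 2 * x₁ ^ 2 * x₂
          - x₁ ^ 3) * E1
        + (-b + y₂ ^ 2 + x₂ * a - 2 * x₂ ^ 2 * x₃ - x₂ ^ 3 - 2 * x₁ * a + 4 * x₁ * x₂ * x₃
          + 2 * x₁ * x₂ ^ 2 - 2 * x₁ ^ 2 * x₃ + 2 * x₁ ^ 2 * x₂ - 4 * x₁ ^ 3) * E2
    constructor
    · intro hS
      have hz : ((x₁ - x₂) ^ 2 * x₃ - ((y₁ - y₂) ^ 2 - (x₁ + x₂) * (x₁ - x₂) ^ 2))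
          * ((x₁ - x₂) ^ 2 * x₃ - ((y₁ + y₂) ^ 2 - (x₁ + x₂) * (x₁ - x₂) ^ 2)) = 0 := by
        have h' := key1
        rw [hS, mul_zero] at h'
        linear_combination h'
      rcases mul_eq_zero.mp hz with h | h
      · refine ⟨y₂, Or.inl rfl, h₂, fun hc => hx hc.1, ?_⟩
        rw [hADD]
        field_simp
        linear_combination -h
      · refine ⟨-y₂, Or.inr rfl, by have := (W.nonsingular_neg _ _).mpr h₂; rwa [hnegY] at this,
          fun hc => hx hc.1, ?_⟩
        rw [hADD]
        field_simp
        linear_combination -h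
    · rintro ⟨w₂, hw₂, h₂', hcond, hX⟩
      have h4 : (x₁ - x₂) ^ 2 ≠ 0 := pow_ne_zero _ hd
      suffices hzz : (x₁ - x₂) ^ 2 * (4 * (x₁ + x₂ + x₃) * (x₁ * x₂ * x₃ + b)
          - (x₁ * x₂ + x₁ * x₃ + x₂ * x₃ - a) ^ 2) = 0 by
        exact (mul_eq_zero.mp hzz).resolve_left h4
      rw [key1]
      rw [hADD] at hX
      field_simp at hX
      rcases hw₂ with h' | h'
      · rw [h'] at hX
        rw [show (x₁ - x₂) ^ 2 * x₃ - ((y₁ - y₂) ^ 2 - (x₁ + x₂) * (x₁ - x₂) ^ 2) = 0 by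
          linear_combination -hX, zero_mul, neg_zero]
      · rw [h'] at hX
        rw [show (x₁ - x₂) ^ 2 * x₃ - ((y₁ + y₂) ^ 2 - (x₁ + x₂) * (x₁ - x₂) ^ 2) = 0 by
          linear_combination -hX, mul_zero, neg_zero]
end

section
/- Let E be an elliptic curve over F_q with a rational point P₁ = (x₁, y₁), and let Φ: E → affine 3-space be the map Q ↦ (x_{Q−P₁}, x_Q, x_{Q+P₁}). Then Φ is injective on the set of points Q ∉ {O, P₁, −P₁}, provided P₁ does not have order 2: distinct such points have distinct image triples. -/
/-- The abscissa of a nonsingular rational point on a Weierstrass curve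
(`none` for the point at infinity). -/
def xcoord {K : Type} [Field K] {W : WeierstrassCurve.Affine K} : W.Point → Option K
  | .zero => none
  | @WeierstrassCurve.Affine.Point.some _ _ _ x _ _ => some x

lemma xcoord_neg {K : Type} [Field K] {W : WeierstrassCurve.Affine K} (R : W.Point) :
    xcoord (-R) = xcoord R := by
  rcases R with _ | @⟨x, y, h⟩
  · rfl
  · rfl

lemma eq_or_eq_neg_of_xcoord_eq {K : Type} [Field K] {W : WeierstrassCurve.Affine K}
    (R R' : W.Point) (hR : R ≠ 0) (hR' : R' ≠ 0) (h : xcoord R = xcoord R') :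
    R' = R ∨ R' = -R := by
  rcases R with _ | @⟨x, y, hxy⟩
  · exact absurd rfl hR
  rcases R' with _ | @⟨x', y', hxy'⟩
  · exact absurd rfl hR'
  simp only [xcoord, Option.some_inj] at h
  subst h
  rcases WeierstrassCurve.Affine.Y_eq_of_X_eq hxy'.1 hxy.1 rfl with hy | hy
  · subst hy; exact Or.inl rfl
  · subst hy
    right
    rw [WeierstrassCurve.Affine.Point.neg_some]

open Classical in
/-- For a reduced Weierstrass curve with rational point `P₁` not of order 2, the map
`Φ : Q ↦ (x_{Q−P₁}, x_Q, x_{Q+P₁})` is injective on points `Q ∉ {O, P₁, −P₁}`. -/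
theorem stmt_18 (K : Type) [Field K] (W : WeierstrassCurve.Affine K)
    (ha1 : W.a₁ = 0) (ha2 : W.a₂ = 0) (ha3 : W.a₃ = 0)
    (x₁ y₁ : K) (h₁ : W.Nonsingular x₁ y₁)
    (P₁ : W.Point) (hP₁ : P₁ = WeierstrassCurve.Affine.Point.some _ _ h₁)
    (h2tors : 2 • P₁ ≠ 0) :
    ∀ Q Q' : W.Point, Q ≠ 0 → Q ≠ P₁ → Q ≠ -P₁ → Q' ≠ 0 → Q' ≠ P₁ → Q' ≠ -P₁ →
      (xcoord (Q - P₁), xcoord Q, xcoord (Q + P₁)) =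
        (xcoord (Q' - P₁), xcoord Q', xcoord (Q' + P₁)) →
      Q = Q' := by
  intro Q Q' hQ0 hQP hQnP hQ'0 hQ'P hQ'nP heq
  rw [Prod.mk.injEq, Prod.mk.injEq] at heq
  obtain ⟨h1, h2, h3⟩ := heq
  rcases eq_or_eq_neg_of_xcoord_eq Q Q' hQ0 hQ'0 h2 with hE | hE
  · exact hE.symm
  -- Q' = -Q
  subst hE
  have hQP₁ : Q + P₁ ≠ 0 := fun h => hQnP (by rw [eq_neg_of_add_eq_zero_left h])
  have hQmP₁ : Q - P₁ ≠ 0 := fun h => hQP (by rwa [sub_eq_zero] at h)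
  have h3' : xcoord (Q + P₁) = xcoord (Q - P₁) := by
    rw [h3, ← xcoord_neg (-Q + P₁)]
    congr 1
    abel
  rcases eq_or_eq_neg_of_xcoord_eq (Q + P₁) (Q - P₁) hQP₁ hQmP₁ h3' with hE | hE
  · -- Q - P₁ = Q + P₁ → 2 • P₁ = 0
    exfalso
    apply h2tors
    have h' : Q + -P₁ = Q + P₁ := by rw [← sub_eq_add_neg]; exact hE
    have hP : -P₁ = P₁ := add_left_cancel h'
    rw [two_smul]
    calc P₁ + P₁ = -P₁ + P₁ := by rw [hP]
      _ = 0 := neg_add_cancel P₁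
  · -- Q - P₁ = -(Q + P₁) → 2 • Q = 0 → -Q = Q
    have h2Q : Q + Q = 0 := by
      have : Q - P₁ + (Q + P₁) = 0 := by rw [hE, neg_add_cancel]
      calc Q + Q = Q - P₁ + (Q + P₁) := by abel
        _ = 0 := this
    have : -Q = Q := by
      rw [neg_eq_iff_add_eq_zero, h2Q]
    exact this.symm
end
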